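/- For every sequence (p_i)_{i∈ℕ} of nonnegative real numbers with ∑_{i∈ℕ} p_i = 1, there exists a family (L_i)_{i∈ℕ} of pairwise disjoint sets of nonempty finite binary words such that the union ⋃_i L_i is prefix-free (no word of the union is a proper prefix of another word of the union) and for every i, ∑_{w ∈ L_i} 2^{-|w|} = p_i. -/

import Mathlib

open Classical in
/-- value of a binary word, read as binary expansion after the point -/
noncomputable def wval : List Bool → ℝ
  | [] => 0
  | b :: t => (if b then (2:ℝ)⁻¹ else 0) + wval t / 2

/-- dyadic interval coded by a word -/
noncomputable def wI (w : List Bool) : Set ℝ :=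
  Set.Ico (wval w) (wval w + (2:ℝ)⁻¹ ^ w.length)

lemma wval_nonneg (w : List Bool) : 0 ≤ wval w := by
  induction w with
  | nil => simp [wval]
  | cons b t ih => simp only [wval]; positivity

lemma wval_add_le (w : List Bool) : wval w + (2:ℝ)⁻¹ ^ w.length ≤ 1 := by
  induction w with
  | nil => simp [wval]
  | cons b t ih =>
    simp only [wval, List.length_cons, pow_succ]
    have hb : (if b then (2:ℝ)⁻¹ else 0) ≤ 2⁻¹ := by split <;> norm_num
    nlinarith [ih]

lemma wval_append (u v : List Bool) :
    wval (u ++ v) = wval u + wval v * (2:ℝ)⁻¹ ^ u.length := by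
  induction u with
  | nil => simp [wval]
  | cons b t ih =>
    simp only [List.cons_append, wval, List.append_eq]
    rw [ih, List.length_cons, pow_succ]
    ring

lemma wI_mono {u w : List Bool} (h : u <+: w) : wI w ⊆ wI u := by
  obtain ⟨v, rfl⟩ := h
  intro x hx
  rw [wI, Set.mem_Ico] at hx ⊢
  rw [wval_append, List.length_append, pow_add] at hx
  have h1 := wval_nonneg v
  have h2 := wval_add_le v
  have hp : (0:ℝ) < (2:ℝ)⁻¹ ^ u.length := by positivity
  constructor
  · nlinarith [hx.1]
  · nlinarith [hx.2]

lemma wI_nonempty (w : List Bool) : (wI w).Nonempty := by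
  refine ⟨wval w, ?_⟩
  rw [wI, Set.mem_Ico]
  have : (0:ℝ) < (2:ℝ)⁻¹ ^ w.length := by positivity
  constructor <;> linarith

/-- overlapping dyadic intervals are nested -/
lemma wI_comparable : ∀ (w w' : List Bool), (wI w ∩ wI w').Nonempty →
    w <+: w' ∨ w' <+: w := by
  intro w
  induction w with
  | nil => intro w' _; exact Or.inl List.nil_prefix
  | cons b t ih =>
    intro w' hne
    match w' with
    | [] => exact Or.inr List.nil_prefix
    | b' :: t' =>
      obtain ⟨x, hx1, hx2⟩ := hne
      rw [wI, Set.mem_Ico] at hx1 hx2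
      simp only [wval, List.length_cons, pow_succ] at hx1 hx2
      have key : b = b' := by
        by_contra hbb
        have h1 := wval_nonneg t
        have h2 := wval_add_le t
        have h3 := wval_nonneg t'
        have h4 := wval_add_le t'
        rcases Bool.eq_false_or_eq_true b with hb | hb <;>
          rcases Bool.eq_false_or_eq_true b' with hb' | hb' <;>
            subst hb <;> subst hb' <;> simp_all <;> nlinarith
      subst key
      have hx1' : 2 * x - (if b then (1:ℝ) else 0) ∈ wI t := by
        rw [wI, Set.mem_Ico]
        constructor
        · rcases Bool.eq_false_or_eq_true b with hb | hb <;> subst hb <;>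
            simp_all <;> nlinarith [hx1.1]
        · rcases Bool.eq_false_or_eq_true b with hb | hb <;> subst hb <;>
            simp_all <;> nlinarith [hx1.2]
      have hx2' : 2 * x - (if b then (1:ℝ) else 0) ∈ wI t' := by
        rw [wI, Set.mem_Ico]
        constructor
        · rcases Bool.eq_false_or_eq_true b with hb | hb <;> subst hb <;>
            simp_all <;> nlinarith [hx2.1]
        · rcases Bool.eq_false_or_eq_true b with hb | hb <;> subst hb <;>
            simp_all <;> nlinarith [hx2.2]
      rcases ih t' ⟨_, hx1', hx2'⟩ with h | h
      · exact Or.inl (List.cons_prefix_cons.mpr ⟨rfl, h⟩)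
      · exact Or.inr (List.cons_prefix_cons.mpr ⟨rfl, h⟩)

lemma prefix_dropLast {w w' : List Bool} (h : w <+: w') (hne : w ≠ w') :
    w <+: w'.dropLast := by
  obtain ⟨v, rfl⟩ := h
  have hv : v ≠ [] := by rintro rfl; simp at hne
  rw [List.dropLast_append_of_ne_nil hv]
  exact ⟨v.dropLast, rfl⟩

/-- maximal dyadic intervals inside `[a, b)` -/
noncomputable def LL (a b : ℝ) : Set (List Bool) :=
  {w | w ≠ [] ∧ wI w ⊆ Set.Ico a b ∧ (w.length = 1 ∨ ¬ wI w.dropLast ⊆ Set.Ico a b)}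

lemma LL_not_prefix {a b : ℝ} {w w' : List Bool} (hw : w ∈ LL a b)
    (hw' : w' ∈ LL a b) (h : w <+: w') : w = w' := by
  by_contra hne
  obtain ⟨hne', hsub', hmax⟩ := hw'
  have hlen : 1 ≤ w.length := by
    cases w with
    | nil => exact absurd rfl hw.1
    | cons x t => simp
  have hlt : w.length < w'.length := lt_of_le_of_ne (List.IsPrefix.length_le h)
    (fun hl => hne (List.IsPrefix.eq_of_length h hl))
  rcases hmax with h1 | h2
  · omega
  · exact h2 (fun x hx => hw.2.1 (wI_mono (prefix_dropLast h hne) hx))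

lemma LL_disjoint_wI {a b : ℝ} {w w' : List Bool} (hw : w ∈ LL a b) (hw' : w' ∈ LL a b)
    (hne : w ≠ w') : Disjoint (wI w) (wI w') := by
  rw [Set.disjoint_iff_inter_eq_empty]
  by_contra hcon
  rcases wI_comparable w w' (Set.nonempty_iff_ne_empty.mpr hcon) with h | h
  · exact hne (LL_not_prefix hw hw' h)
  · exact hne ((LL_not_prefix hw' hw h).symm)

open Classical in
/-- binary digits of `x` -/
noncomputable def dig (x : ℝ) : ℕ → List Bool
  | 0 => []
  | n + 1 => dig x n ++ [if wval (dig x n) + (2:ℝ)⁻¹ ^ (n+1) ≤ x then true else false]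

lemma dig_length (x : ℝ) (n : ℕ) : (dig x n).length = n := by
  induction n with
  | zero => rfl
  | succ n ih => simp [dig, ih]

lemma dig_mem (x : ℝ) (hx0 : 0 ≤ x) (hx1 : x < 1) (n : ℕ) :
    wval (dig x n) ≤ x ∧ x < wval (dig x n) + (2:ℝ)⁻¹ ^ n := by
  induction n with
  | zero => simpa [dig, wval] using ⟨hx0, hx1⟩
  | succ n ih =>
    have hps : (2:ℝ)⁻¹ ^ (n+1) = (2:ℝ)⁻¹ ^ n * 2⁻¹ := pow_succ _ _
    rw [dig, wval_append, dig_length]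
    by_cases hc : wval (dig x n) + (2:ℝ)⁻¹ ^ (n+1) ≤ x
    · rw [if_pos hc]
      simp only [wval, if_true, if_false]
      norm_num
      constructor
      · nlinarith [ih.1, ih.2, hps]
      · nlinarith [ih.1, ih.2, hps]
    · rw [if_neg hc]
      push_neg at hc
      simp only [wval, if_true, if_false]
      norm_num
      constructor
      · nlinarith [ih.1, ih.2, hps]
      · nlinarith [ih.1, ih.2, hps]

lemma dig_dropLast (x : ℝ) (n : ℕ) : (dig x (n+1)).dropLast = dig x n := by
  rw [dig, List.dropLast_concat]

/-- coverage: every point of `(a,b) ⊆ [0,1)` lies in some maximal dyadic interval -/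
lemma LL_cover {a b x : ℝ} (ha : 0 ≤ a) (hb : b ≤ 1) (hx : x ∈ Set.Ioo a b) :
    ∃ w ∈ LL a b, x ∈ wI w := by
  classical
  have hx0 : 0 ≤ x := le_of_lt (lt_of_le_of_lt ha hx.1)
  have hx1 : x < 1 := lt_of_lt_of_le hx.2 hb
  have hdm := dig_mem x hx0 hx1
  have hP : ∃ n, 1 ≤ n ∧ wI (dig x n) ⊆ Set.Ico a b := by
    obtain ⟨n, hn⟩ : ∃ n : ℕ, (2:ℝ)⁻¹ ^ n < min (x - a) (b - x) :=
      exists_pow_lt_of_lt_one (lt_min (by linarith [hx.1]) (by linarith [hx.2]))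
        (by norm_num)
    refine ⟨max n 1, le_max_right _ _, ?_⟩
    have hle : (2:ℝ)⁻¹ ^ max n 1 ≤ (2:ℝ)⁻¹ ^ n :=
      pow_le_pow_of_le_one (by norm_num) (by norm_num) (le_max_left _ _)
    intro y hy
    rw [wI, Set.mem_Ico, dig_length] at hy
    have h1 := (hdm (max n 1)).1
    have h2 := (hdm (max n 1)).2
    have hna := lt_of_le_of_lt hle (lt_of_lt_of_le hn (min_le_left _ _))
    have hnb := lt_of_le_of_lt hle (lt_of_lt_of_le hn (min_le_right _ _))
    constructor
    · linarith [hy.1]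
    · linarith [hy.2]
  set N := Nat.find hP with hN
  obtain ⟨hN1, hNsub⟩ := Nat.find_spec hP
  refine ⟨dig x N, ⟨?_, hNsub, ?_⟩, ?_⟩
  · intro hnil
    have := dig_length x N
    rw [hnil] at this
    simp only [List.length_nil] at this
    omega
  · rcases Nat.lt_or_ge 1 N with h | h
    · right
      obtain ⟨M, hM⟩ : ∃ M, N = M + 1 := ⟨N - 1, by omega⟩
      rw [hM, dig_dropLast]
      intro hcon
      exact Nat.find_min hP (show M < N by omega) ⟨by omega, hcon⟩
    · left; rw [dig_length]; omega
  · rw [wI, Set.mem_Ico, dig_length]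
    exact ⟨(hdm N).1, (hdm N).2⟩

lemma LL_tsum {a b : ℝ} (hab : a ≤ b) (ha : 0 ≤ a) (hb : b ≤ 1) :
    ∑' w : (LL a b), ((2:ℝ)⁻¹) ^ (w : List Bool).length = b - a := by
  have hdisj : Pairwise (Function.onFun Disjoint fun w : LL a b => wI (w : List Bool)) := by
    intro w w' hne
    exact LL_disjoint_wI w.2 w'.2 (Subtype.coe_ne_coe.mpr hne)
  have hmeas : ∀ w : LL a b, MeasurableSet (wI (w : List Bool)) :=
    fun w => measurableSet_Ico
  have hvol : MeasureTheory.volume (⋃ w : LL a b, wI (w : List Bool))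
      = ∑' w : LL a b, MeasureTheory.volume (wI (w : List Bool)) :=
    MeasureTheory.measure_iUnion hdisj hmeas
  have hsub : (⋃ w : LL a b, wI (w : List Bool)) ⊆ Set.Ico a b := by
    rintro x hx
    obtain ⟨w, hw⟩ := Set.mem_iUnion.mp hx
    exact w.2.2.1 hw
  have hsup : Set.Ioo a b ⊆ ⋃ w : LL a b, wI (w : List Bool) := by
    intro x hx
    obtain ⟨w, hw, hxw⟩ := LL_cover ha hb hx
    exact Set.mem_iUnion.mpr ⟨⟨w, hw⟩, hxw⟩
  have hvol2 : MeasureTheory.volume (⋃ w : LL a b, wI (w : List Bool))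
      = ENNReal.ofReal (b - a) := by
    apply le_antisymm
    · calc MeasureTheory.volume (⋃ w : LL a b, wI (w : List Bool))
          ≤ MeasureTheory.volume (Set.Ico a b) := MeasureTheory.measure_mono hsub
        _ = ENNReal.ofReal (b - a) := Real.volume_Ico
    · calc ENNReal.ofReal (b - a) = MeasureTheory.volume (Set.Ioo a b) := Real.volume_Ioo.symm
        _ ≤ _ := MeasureTheory.measure_mono hsup
  have hterm : ∀ w : LL a b, MeasureTheory.volume (wI (w : List Bool))
      = ENNReal.ofReal ((2:ℝ)⁻¹ ^ (w : List Bool).length) := by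
    intro w
    rw [wI, Real.volume_Ico]
    congr 1
    ring
  have hsum2 : ∑' w : LL a b, ENNReal.ofReal ((2:ℝ)⁻¹ ^ (w : List Bool).length)
      = ENNReal.ofReal (b - a) :=
    (tsum_congr hterm).symm.trans (hvol.symm.trans hvol2)
  have h3 := congrArg ENNReal.toReal hsum2
  rw [ENNReal.tsum_toReal_eq (fun w => ENNReal.ofReal_ne_top)] at h3
  rw [ENNReal.toReal_ofReal (by linarith)] at h3
  rw [← h3]
  exact tsum_congr fun w => (ENNReal.toReal_ofReal (by positivity)).symm

/-- Every probability distribution `(p_i)` on `ℕ` can be realized by pairwise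
disjoint sets `L_i` of nonempty binary words, with prefix-free union, where `L_i`
has total dyadic weight `∑_{w ∈ L_i} 2^{-|w|} = p_i`. -/
theorem stmt_14 (p : ℕ → ℝ) (hnn : ∀ i : ℕ, 0 ≤ p i) (hsum : ∑' i : ℕ, p i = 1) :
    ∃ L : ℕ → Set (List Bool),
      (∀ i : ℕ, ∀ w ∈ L i, w ≠ []) ∧
      (∀ i j : ℕ, i ≠ j → Disjoint (L i) (L j)) ∧
      (∀ w ∈ ⋃ i : ℕ, L i, ∀ w' ∈ ⋃ i : ℕ, L i, w <+: w' → w = w') ∧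
      (∀ i : ℕ, ∑' w : (L i), ((2 : ℝ)⁻¹) ^ (w : List Bool).length = p i) := by
  have hsummable : Summable p := by
    by_contra hs
    rw [tsum_eq_zero_of_not_summable hs] at hsum
    norm_num at hsum
  set s : ℕ → ℝ := fun n => ∑ j ∈ Finset.range n, p j with hs
  have hs0 : ∀ n, 0 ≤ s n := fun n => Finset.sum_nonneg fun j _ => hnn j
  have hs1 : ∀ n, s n ≤ 1 := by
    intro n
    rw [← hsum]
    exact Summable.sum_le_tsum (Finset.range n) (fun j _ => hnn j) hsummable
  have hmono : Monotone s := by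
    intro m n hmn
    exact Finset.sum_le_sum_of_subset_of_nonneg (Finset.range_subset_range.mpr hmn)
      (fun j _ _ => hnn j)
  have hstep : ∀ i, s (i + 1) - s i = p i := by
    intro i
    rw [hs]
    simp [Finset.sum_range_succ]
  have key : ∀ i j : ℕ, i < j →
      Disjoint (Set.Ico (s i) (s (i+1))) (Set.Ico (s j) (s (j+1))) := by
    intro i j h
    rw [Set.disjoint_left]
    rintro x ⟨_, hx2⟩ ⟨hx3, _⟩
    have : s (i+1) ≤ s j := hmono h
    linarith
  have hIdisj : ∀ i j : ℕ, i ≠ j →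
      Disjoint (Set.Ico (s i) (s (i+1))) (Set.Ico (s j) (s (j+1))) := by
    intro i j hij
    rcases Nat.lt_or_ge i j with h | h
    · exact key i j h
    · exact (key j i (lt_of_le_of_ne h (Ne.symm hij))).symm
  refine ⟨fun i => LL (s i) (s (i+1)), ?_, ?_, ?_, ?_⟩
  · intro i w hw
    exact hw.1
  · intro i j hij
    rw [Set.disjoint_left]
    intro w hwi hwj
    have h1 : wI w ⊆ Set.Ico (s i) (s (i+1)) := hwi.2.1
    have h2 : wI w ⊆ Set.Ico (s j) (s (j+1)) := hwj.2.1
    obtain ⟨x, hx⟩ := wI_nonempty w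
    exact Set.disjoint_left.mp (hIdisj i j hij) (h1 hx) (h2 hx)
  · intro w hw w' hw' hpre
    obtain ⟨i, hwi⟩ := Set.mem_iUnion.mp hw
    obtain ⟨j, hwj⟩ := Set.mem_iUnion.mp hw'
    have hij : i = j := by
      by_contra hij
      obtain ⟨x, hx⟩ := wI_nonempty w'
      exact Set.disjoint_left.mp (hIdisj i j hij)
        (hwi.2.1 (wI_mono hpre hx)) (hwj.2.1 hx)
    subst hij
    exact LL_not_prefix hwi hwj hpre
  · intro i
    rw [LL_tsum (by linarith [hstep i, hnn i]) (hs0 i) (hs1 (i+1)), hstep i]
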